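/- Let g_s(n) denote the number of sequences q of length n over {A,C,G,T} such that μ_i(q) = 0 for all i = 1,…,s. Then for all n > s ≥ 1, g_s(n) = 2·g_s(n−1) + g_s(n−s). -/

import Mathlib

inductive Base : Type
  | A | C | G | T
deriving DecidableEq

instance instFintypeBase : Fintype Base :=
  ⟨{Base.A, Base.C, Base.G, Base.T}, fun x => by cases x <;> decide⟩

def Base.compl : Base → Base
  | .A => .T
  | .T => .A
  | .C => .G
  | .G => .C

/-- `μ_i(q)`: the number of indices `ℓ` with `ℓ + i < n` (0-based) such that
`q_ℓ` is the Watson-Crick complement of `q_{ℓ+i}`. -/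
noncomputable def mu (n i : ℕ) (q : Fin n → Base) : ℕ :=
  Set.ncard {ℓ : ℕ | ∃ h : ℓ + i < n, q ⟨ℓ, by omega⟩ = (q ⟨ℓ + i, h⟩).compl}

/-- `g_s(n)`: the number of length-`n` DNA sequences with `μ_i(q) = 0` for `i = 1,…,s`. -/
noncomputable def gcount (s n : ℕ) : ℕ :=
  Nat.card {q : Fin n → Base // ∀ i, 1 ≤ i → i ≤ s → mu n i q = 0}

/-! ### Auxiliary material -/

lemma Base.compl_compl (b : Base) : b.compl.compl = b := by cases b <;> rfl

lemma Base.ne_compl_self (b : Base) : b ≠ b.compl := by cases b <;> simp [Base.compl]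

lemma ne_compl_symm {u v : Base} (h : u ≠ v.compl) : v ≠ u.compl := by
  intro hv
  apply h
  rw [hv, Base.compl_compl]

lemma card3 : ∀ v : Base,
    (Finset.univ.filter (fun x : Base => x ≠ v.compl)).card = 3 := by decide

lemma card2 : ∀ u v : Base, u ≠ v →
    (Finset.univ.filter (fun x : Base => x ≠ u.compl ∧ x ≠ v.compl)).card = 2 := by decide

lemma triple : ∀ u v w : Base, u ≠ v → u ≠ v.compl → v ≠ u.compl → u ≠ w.compl →
    w ≠ u.compl → v ≠ w.compl → w ≠ v.compl → (w = u ∨ w = v) := by decide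

/-- A word is good if no letter is the complement of a letter at distance `≤ s` to its right. -/
def Good (s n : ℕ) (q : Fin n → Base) : Prop :=
  ∀ a b : Fin n, (a : ℕ) < (b : ℕ) → (b : ℕ) ≤ (a : ℕ) + s → q a ≠ (q b).compl

instance (s n : ℕ) : DecidablePred (Good s n) := fun _ => by
  unfold Good; infer_instance

/-- The first `s` letters of a word coincide. -/
def FirstEq (s n : ℕ) (q : Fin n → Base) : Prop :=
  ∀ a b : Fin n, (a : ℕ) < s → (b : ℕ) < s → q a = q b

instance (s n : ℕ) : DecidablePred (FirstEq s n) := fun _ => by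
  unfold FirstEq; infer_instance

def cnt (s n : ℕ) : ℕ := (Finset.univ.filter (Good s n)).card

lemma mu_zero_iff (n i : ℕ) (q : Fin n → Base) :
    mu n i q = 0 ↔
      ∀ ℓ (h : ℓ + i < n), q ⟨ℓ, by omega⟩ ≠ (q ⟨ℓ + i, h⟩).compl := by
  unfold mu
  rw [Set.ncard_eq_zero (Set.Finite.subset (Set.finite_Iio n)
    (by rintro ℓ ⟨h, -⟩; simp only [Set.mem_Iio]; omega))]
  constructor
  · intro h ℓ hl hq
    have hmem : ℓ ∈ {ℓ : ℕ | ∃ h : ℓ + i < n, q ⟨ℓ, by omega⟩ = (q ⟨ℓ + i, h⟩).compl} :=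
      ⟨hl, hq⟩
    rw [h] at hmem
    exact hmem
  · intro h
    ext ℓ
    simp only [Set.mem_setOf_eq, Set.mem_empty_iff_false, iff_false]
    rintro ⟨hl, hq⟩
    exact h ℓ hl hq

lemma cond_iff_good (s n : ℕ) (q : Fin n → Base) :
    (∀ i, 1 ≤ i → i ≤ s → mu n i q = 0) ↔ Good s n q := by
  constructor
  · intro h a b hab hbs
    have h2 := (mu_zero_iff n ((b : ℕ) - a) q).mp
      (h ((b : ℕ) - a) (by omega) (by omega)) (a : ℕ) (by omega)
    have e1 : (⟨(a : ℕ), by omega⟩ : Fin n) = a := by ext; rfl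
    have e2 : (⟨(a : ℕ) + ((b : ℕ) - a), by omega⟩ : Fin n) = b := by ext; simp; omega
    rwa [e1, e2] at h2
  · intro h i h1 h2
    rw [mu_zero_iff]
    intro ℓ hl
    exact h ⟨ℓ, by omega⟩ ⟨ℓ + i, hl⟩ (by simp; omega) (by simp; omega)

lemma gcount_eq (s n : ℕ) : gcount s n = cnt s n := by
  unfold gcount cnt
  rw [Nat.card_congr (Equiv.subtypeEquivRight (fun q => cond_iff_good s n q))]
  rw [Nat.card_eq_fintype_card, Fintype.card_subtype]

lemma good_cons_iff (s m : ℕ) (hm : s ≤ m) (x : Base) (r : Fin m → Base) :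
    Good s (m + 1) (Fin.cons x r) ↔
      (Good s m r ∧ ∀ j : Fin m, (j : ℕ) < s → x ≠ (r j).compl) := by
  constructor
  · intro h
    constructor
    · intro a b hab hbs
      have := h a.succ b.succ (by simp; omega) (by simp; omega)
      simpa [Fin.cons_succ] using this
    · intro j hj
      have := h 0 j.succ (by simp) (by simp; omega)
      simpa [Fin.cons_succ] using this
  · rintro ⟨hg, hok⟩ a b hab hbs
    have hb : (b : ℕ) ≠ 0 := by omega
    set j : Fin m := ⟨(b : ℕ) - 1, by omega⟩ with hj
    have hbj : b = j.succ := by ext; simp [hj]; omega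
    by_cases ha : (a : ℕ) = 0
    · have ha0 : a = 0 := by ext; exact ha
      rw [ha0, hbj, Fin.cons_zero, Fin.cons_succ]
      exact hok j (by simp [hj]; omega)
    · set i : Fin m := ⟨(a : ℕ) - 1, by omega⟩ with hi
      have hai : a = i.succ := by ext; simp [hi]; omega
      rw [hai, hbj, Fin.cons_succ, Fin.cons_succ]
      exact hg i j (by simp [hi, hj]; omega) (by simp [hi, hj]; omega)

lemma count_ext (s m : ℕ) (hs : 1 ≤ s) (hm : s ≤ m) (r : Fin m → Base)
    (hr : Good s m r) :
    (Finset.univ.filter (fun x : Base => ∀ j : Fin m, (j : ℕ) < s → x ≠ (r j).compl)).card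
      = if FirstEq s m r then 3 else 2 := by
  have nc : ∀ a b : Fin m, (a : ℕ) < s → (b : ℕ) < s → (a : ℕ) ≠ (b : ℕ) →
      r a ≠ (r b).compl := by
    intro a b ha hb hab
    rcases lt_or_gt_of_ne hab with h | h
    · exact hr a b h (by omega)
    · exact ne_compl_symm (hr b a h (by omega))
  split_ifs with hfe
  · have h0 : (0 : ℕ) < m := by omega
    set z : Fin m := ⟨0, h0⟩ with hz
    have : (Finset.univ.filter
        (fun x : Base => ∀ j : Fin m, (j : ℕ) < s → x ≠ (r j).compl))
        = Finset.univ.filter (fun x : Base => x ≠ (r z).compl) := by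
      apply Finset.filter_congr
      intro x _
      constructor
      · intro h; exact h z (by simp [hz]; omega)
      · intro h j hj
        rw [hfe j z hj (by simp [hz]; omega)]
        exact h
    rw [this, card3]
  · unfold FirstEq at hfe
    push_neg at hfe
    obtain ⟨a, b, ha, hb, hne⟩ := hfe
    have hab : (a : ℕ) ≠ (b : ℕ) := by
      intro h
      exact hne (congrArg r (Fin.ext h))
    have h1 : r a ≠ (r b).compl := nc a b ha hb hab
    have h2 : r b ≠ (r a).compl := nc b a hb ha (Ne.symm hab)
    have : (Finset.univ.filter
        (fun x : Base => ∀ j : Fin m, (j : ℕ) < s → x ≠ (r j).compl))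
        = Finset.univ.filter (fun x : Base => x ≠ (r a).compl ∧ x ≠ (r b).compl) := by
      apply Finset.filter_congr
      intro x _
      constructor
      · intro h
        exact ⟨h a ha, h b hb⟩
      · rintro ⟨hxa, hxb⟩ j hj
        by_cases hja : (j : ℕ) = (a : ℕ)
        · rw [congrArg r (Fin.ext hja)]; exact hxa
        by_cases hjb : (j : ℕ) = (b : ℕ)
        · rw [congrArg r (Fin.ext hjb)]; exact hxb
        rcases triple (r a) (r b) (r j) hne h1 h2
            (nc a j ha hj (Ne.symm hja)) (nc j a hj ha hja)
            (nc b j hb hj (Ne.symm hjb)) (nc j b hj hb hjb) with h | h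
        · rw [h]; exact hxa
        · rw [h]; exact hxb
    rw [this, card2 _ _ hne]

lemma step1 (s m : ℕ) (hs : 1 ≤ s) (hm : s ≤ m) :
    cnt s (m + 1) = 2 * cnt s m
      + (Finset.univ.filter (fun q => Good s m q ∧ FirstEq s m q)).card := by
  unfold cnt
  rw [Finset.card_filter]
  rw [← Equiv.sum_comp (Fin.consEquiv (fun _ : Fin (m + 1) => Base))
    (fun q => if Good s (m + 1) q then 1 else 0)]
  have hstep : ∀ p : Base × (Fin m → Base),
      (if Good s (m + 1) ((Fin.consEquiv (fun _ : Fin (m + 1) => Base)) p) then 1 else 0)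
        = if Good s (m + 1) (Fin.cons p.1 p.2) then (1 : ℕ) else 0 := by
    intro p; rfl
  rw [Finset.sum_congr rfl (fun p _ => hstep p)]
  rw [Fintype.sum_prod_type]
  rw [Finset.sum_comm]
  have hinner : ∀ r : Fin m → Base,
      (∑ x : Base, if Good s (m + 1) (Fin.cons x r) then (1 : ℕ) else 0)
        = if Good s m r then (if FirstEq s m r then 3 else 2) else 0 := by
    intro r
    by_cases hg : Good s m r
    · have : ∀ x : Base, (if Good s (m + 1) (Fin.cons x r) then (1 : ℕ) else 0)
          = if (∀ j : Fin m, (j : ℕ) < s → x ≠ (r j).compl) then 1 else 0 := by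
        intro x
        congr 1
        rw [good_cons_iff s m hm x r]
        simp [hg]
      rw [Finset.sum_congr rfl (fun x _ => this x), ← Finset.card_filter]
      rw [count_ext s m hs hm r hg, if_pos hg]
    · have : ∀ x : Base, (if Good s (m + 1) (Fin.cons x r) then (1 : ℕ) else 0) = 0 := by
        intro x
        rw [if_neg]
        rw [good_cons_iff s m hm x r]
        tauto
      rw [Finset.sum_congr rfl (fun x _ => this x), if_neg hg]
      simp
  rw [Finset.sum_congr rfl (fun r _ => hinner r)]
  rw [← Finset.sum_filter]
  have : ∀ r ∈ Finset.univ.filter (Good s m),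
      (if FirstEq s m r then (3 : ℕ) else 2) = 2 + (if FirstEq s m r then 1 else 0) := by
    intro r _
    split_ifs <;> rfl
  rw [Finset.sum_congr rfl this, Finset.sum_add_distrib, Finset.sum_const,
    ← Finset.card_filter, Finset.filter_filter, smul_eq_mul, mul_comm]

lemma step2 (s m : ℕ) (hs : 1 ≤ s) (hm : s ≤ m) :
    (Finset.univ.filter (fun q => Good s m q ∧ FirstEq s m q)).card
      = cnt s (m - s + 1) := by
  set k := m - s + 1 with hk
  set t := s - 1 with ht
  unfold cnt
  apply Finset.card_nbij'
    (i := fun (q : Fin m → Base) (i : Fin k) => q ⟨(i : ℕ) + t, by omega⟩)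
    (j := fun (r : Fin k → Base) (j : Fin m) => r ⟨(j : ℕ) - t, by omega⟩)
  · -- maps forward
    intro q hq
    simp only [Finset.mem_coe, Finset.mem_filter, Finset.mem_univ, true_and] at hq ⊢
    obtain ⟨hg, -⟩ := hq
    intro a b hab hbs
    exact hg ⟨(a : ℕ) + t, by omega⟩ ⟨(b : ℕ) + t, by omega⟩ (by simp; omega)
      (by simp; omega)
  · -- maps backward
    intro r hr
    simp only [Finset.mem_coe, Finset.mem_filter, Finset.mem_univ, true_and] at hr ⊢
    constructor
    · intro a b hab hbs
      by_cases hbt : (b : ℕ) ≤ t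
      · have : (⟨(a : ℕ) - t, by omega⟩ : Fin k) = ⟨(b : ℕ) - t, by omega⟩ := by
          ext; simp; omega
        dsimp only
        rw [this]
        exact fun h => Base.ne_compl_self _ h
      · exact hr ⟨(a : ℕ) - t, by omega⟩ ⟨(b : ℕ) - t, by omega⟩ (by simp; omega)
          (by simp; omega)
    · intro a b ha hb
      have : (⟨(a : ℕ) - t, by omega⟩ : Fin k) = ⟨(b : ℕ) - t, by omega⟩ := by
        ext; simp; omega
      dsimp only
      rw [this]
  · -- left inverse
    intro q hq
    simp only [Finset.mem_coe, Finset.mem_filter, Finset.mem_univ, true_and] at hq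
    obtain ⟨-, hfe⟩ := hq
    funext j
    dsimp only
    by_cases hjt : (j : ℕ) < t
    · have h1 : ((j : ℕ) - t) + t = t := by omega
      show q ⟨((j : ℕ) - t) + t, by omega⟩ = q j
      have : (⟨((j : ℕ) - t) + t, by omega⟩ : Fin m) = ⟨t, by omega⟩ := by ext; simp; omega
      rw [this]
      exact hfe ⟨t, by omega⟩ j (by simp; omega) (by omega)
    · show q ⟨((j : ℕ) - t) + t, by omega⟩ = q j
      have : (⟨((j : ℕ) - t) + t, by omega⟩ : Fin m) = j := by ext; simp; omega
      rw [this]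
  · -- right inverse
    intro r _
    funext i
    dsimp only
    show r ⟨((i : ℕ) + t) - t, by omega⟩ = r i
    have : (⟨((i : ℕ) + t) - t, by omega⟩ : Fin k) = i := by ext; simp
    rw [this]

/-- For all `n > s ≥ 1`, `g_s(n) = 2 g_s(n-1) + g_s(n-s)`. -/
theorem stmt2 (s n : ℕ) (hs : 1 ≤ s) (hn : s < n) :
    gcount s n = 2 * gcount s (n - 1) + gcount s (n - s) := by
  have hm : s ≤ n - 1 := by omega
  have key := step1 s (n - 1) hs hm
  rw [step2 s (n - 1) hs hm] at key
  have e1 : cnt s n = cnt s ((n - 1) + 1) := by rw [show (n - 1) + 1 = n by omega]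
  have e2 : cnt s (n - s) = cnt s ((n - 1) - s + 1) := by
    rw [show (n - 1) - s + 1 = n - s by omega]
  rw [gcount_eq, gcount_eq, gcount_eq, e1, key, e2]
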